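/- arXiv:1305.6998 — 5 statements merged into one kernel-verified Lean document; each statement's English description precedes it below -/
import Mathlib

section
/- If s > 0, 0 < t ≤ 1 and δ, δ' ≥ 0 with δ' ≥ δ, then 2^{-δ'-δ} · s^{(δ,δ')} · t^{δ'} ≤ (s·t)^{(δ,δ')} ≤ 2^{2δ'} · s^{(δ,δ')} · t^{δ}. -/
/-- The two-regime power: `a^{(μ,μ')} = a^μ` if `a ≤ 1` and `a^{μ'}` if `a ≥ 1`. -/
noncomputable def ppow (a μ μ' : ℝ) : ℝ := if a ≤ 1 then a ^ μ else a ^ μ'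

theorem stmt2 (s t δ δ' : ℝ) (hs : 0 < s) (ht0 : 0 < t) (ht1 : t ≤ 1)
    (hδ : 0 ≤ δ) (hδ' : 0 ≤ δ') (hle : δ ≤ δ') :
    (2:ℝ) ^ (-δ' - δ) * ppow s δ δ' * t ^ δ' ≤ ppow (s * t) δ δ' ∧
    ppow (s * t) δ δ' ≤ (2:ℝ) ^ (2 * δ') * ppow s δ δ' * t ^ δ := by
  have h2 : (1:ℝ) ≤ 2 ^ (2 * δ') := Real.one_le_rpow one_le_two (by positivity)
  have h2' : (2:ℝ) ^ (-δ' - δ) ≤ 1 :=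
    Real.rpow_le_one_of_one_le_of_nonpos one_le_two (by linarith)
  have h2p : (0:ℝ) < 2 ^ (-δ' - δ) := by positivity
  have htd : t ^ δ' ≤ t ^ δ := Real.rpow_le_rpow_of_exponent_ge ht0 ht1 hle
  have htdp : (0:ℝ) < t ^ δ := Real.rpow_pos_of_pos ht0 δ
  have htdp' : (0:ℝ) < t ^ δ' := Real.rpow_pos_of_pos ht0 δ'
  have hsd : (0:ℝ) < s ^ δ := Real.rpow_pos_of_pos hs δ
  have hsd' : (0:ℝ) < s ^ δ' := Real.rpow_pos_of_pos hs δ'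
  have hmul : ∀ μ : ℝ, (s * t) ^ μ = s ^ μ * t ^ μ := fun μ => Real.mul_rpow hs.le ht0.le
  unfold ppow
  split_ifs with hs1 hst hst
  · -- s ≤ 1, s*t ≤ 1
    rw [hmul]
    constructor
    · calc (2:ℝ) ^ (-δ' - δ) * s ^ δ * t ^ δ' ≤ 1 * s ^ δ * t ^ δ := by
            gcongr
        _ = s ^ δ * t ^ δ := by ring
    · calc s ^ δ * t ^ δ = 1 * s ^ δ * t ^ δ := by ring
        _ ≤ 2 ^ (2 * δ') * s ^ δ * t ^ δ := by gcongr
  · -- s ≤ 1, s*t > 1 : contradiction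
    exact absurd (le_trans (by nlinarith : s * t ≤ s) hs1) hst
  · -- s > 1, s*t ≤ 1
    rw [hmul]
    have hss : s ^ δ ≤ s ^ δ' := Real.rpow_le_rpow_of_exponent_le (le_of_not_ge hs1) hle
    have hst' : (s * t) ^ δ' ≤ (s * t) ^ δ :=
      Real.rpow_le_rpow_of_exponent_ge (by positivity) hst hle
    rw [hmul, hmul] at hst'
    constructor
    · calc (2:ℝ) ^ (-δ' - δ) * s ^ δ' * t ^ δ' ≤ 1 * s ^ δ' * t ^ δ' := by gcongr
        _ = s ^ δ' * t ^ δ' := by ring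
        _ ≤ s ^ δ * t ^ δ := hst'
    · calc s ^ δ * t ^ δ ≤ s ^ δ' * t ^ δ := by gcongr
        _ = 1 * s ^ δ' * t ^ δ := by ring
        _ ≤ 2 ^ (2 * δ') * s ^ δ' * t ^ δ := by gcongr
  · -- s > 1, s*t > 1
    rw [hmul]
    constructor
    · calc (2:ℝ) ^ (-δ' - δ) * s ^ δ' * t ^ δ' ≤ 1 * s ^ δ' * t ^ δ' := by gcongr
        _ = s ^ δ' * t ^ δ' := by ring
    · calc s ^ δ' * t ^ δ' ≤ 1 * s ^ δ' * t ^ δ := by rw [one_mul]; gcongr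
        _ ≤ 2 ^ (2 * δ') * s ^ δ' * t ^ δ := by gcongr
end

section
/- Let δ ∈ [0, 1/2). Then for every ψ ∈ C¹(ℝ), ∫_{−1}^{1} |x|^{2δ} (ψ'(x))² dx ≥ ((1 − 2δ)/2) · ∫_{−1}^{1} (ψ(x) − ⟨ψ⟩)² dx, where ⟨ψ⟩ = (1/2) ∫_{−1}^{1} ψ. -/
open MeasureTheory intervalIntegral Real Set

lemma cs_int {a b : ℝ} (hab : a ≤ b) {f g : ℝ → ℝ}
    (hf2 : IntervalIntegrable (fun t => f t ^ 2) volume a b)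
    (hg2 : IntervalIntegrable (fun t => g t ^ 2) volume a b)
    (hfg : IntervalIntegrable (fun t => f t * g t) volume a b) :
    (∫ t in a..b, f t * g t) ^ 2 ≤ (∫ t in a..b, f t ^ 2) * (∫ t in a..b, g t ^ 2) := by
  set If : ℝ := ∫ t in a..b, f t ^ 2
  set Ig : ℝ := ∫ t in a..b, g t ^ 2
  set Ifg : ℝ := ∫ t in a..b, f t * g t
  have key : ∀ lam : ℝ, 0 ≤ Ig * (lam * lam) + (2 * Ifg) * lam + If := by
    intro lam
    have h1 : (∫ t in a..b, (f t + lam * g t) ^ 2)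
        = If + 2 * lam * Ifg + lam ^ 2 * Ig := by
      have he : ∀ t : ℝ, (f t + lam * g t) ^ 2
          = f t ^ 2 + (2 * lam) * (f t * g t) + lam ^ 2 * g t ^ 2 := fun t => by ring
      simp only [he]
      rw [integral_add (hf2.add (hfg.const_mul _)) (hg2.const_mul _),
        integral_add hf2 (hfg.const_mul _)]
      simp only [intervalIntegral.integral_const_mul]
      rfl
    have h2 : 0 ≤ ∫ t in a..b, (f t + lam * g t) ^ 2 :=
      integral_nonneg hab (fun u _ => sq_nonneg _)
    rw [h1] at h2
    nlinarith [h2]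
  have hd := discrim_le_zero key
  rw [discrim] at hd
  nlinarith [hd]

lemma ae_ne_zero : ∀ᵐ t : ℝ ∂volume, t ≠ 0 := by
  have h : volume ({0} : Set ℝ) = 0 := Real.volume_singleton
  rw [ae_iff]
  convert h using 2
  ext t
  simp

lemma abs_rpow_intInt {r : ℝ} (hr : -1 < r) (a b : ℝ) :
    IntervalIntegrable (fun t => |t| ^ r) volume a b := by
  suffices h : ∀ c : ℝ, 0 ≤ c → IntervalIntegrable (fun t => |t| ^ r) volume 0 c by
    have h' : ∀ c : ℝ, IntervalIntegrable (fun t => |t| ^ r) volume 0 c := by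
      intro c
      rcases le_total 0 c with hc | hc
      · exact h c hc
      · have := (IntervalIntegrable.iff_comp_neg (by simp)).mp (h (-c) (by linarith))
        simpa using this
    exact (h' a).symm.trans (h' b)
  intro c hc
  have := intervalIntegrable_rpow' (a := 0) (b := c) hr
  refine this.congr_ae ?_
  rw [Filter.EventuallyEq, ae_restrict_iff' measurableSet_uIoc]
  filter_upwards with t ht
  rw [uIoc_of_le hc] at ht
  rw [abs_of_pos ht.1]

lemma int_abs_rpow {r : ℝ} (hr : -1 < r) {x : ℝ} (hx : 0 ≤ x) :
    ∫ t in (0:ℝ)..x, |t| ^ r = x ^ (r + 1) / (r + 1) := by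
  have h1 : ∫ t in (0:ℝ)..x, |t| ^ r = ∫ t in (0:ℝ)..x, t ^ r := by
    apply intervalIntegral.integral_congr_ae
    filter_upwards with t ht
    rw [uIoc_of_le hx] at ht
    rw [abs_of_pos ht.1]
  rw [h1, integral_rpow (Or.inl hr), Real.zero_rpow (by linarith), sub_zero]

lemma int_sub_le {f : ℝ → ℝ} (hf : ∀ t, 0 ≤ f t)
    (hint : ∀ a b : ℝ, IntervalIntegrable f volume a b)
    {a b c d : ℝ} (hac : a ≤ c) (_hcd : c ≤ d) (hdb : d ≤ b) :
    ∫ t in c..d, f t ≤ ∫ t in a..b, f t := by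
  have e1 : ∫ t in a..b, f t = (∫ t in a..c, f t) + ((∫ t in c..d, f t) + (∫ t in d..b, f t)) := by
    rw [integral_add_adjacent_intervals (hint c d) (hint d b),
        integral_add_adjacent_intervals (hint a c) (hint c b)]
  have n1 : 0 ≤ ∫ t in a..c, f t := integral_nonneg hac fun u _ => hf u
  have n2 : 0 ≤ ∫ t in d..b, f t := integral_nonneg hdb fun u _ => hf u
  linarith

lemma key_half (δ : ℝ) (hδ0 : 0 ≤ δ) (hδ : δ < 1/2) (D : ℝ → ℝ) (hD : Continuous D)
    {x : ℝ} (hx0 : 0 ≤ x) (hx1 : x ≤ 1) :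
    (∫ t in (0:ℝ)..x, D t) ^ 2 ≤
      (∫ t in (-1:ℝ)..1, |t| ^ (2*δ) * D t ^ 2) * (x ^ (1 - 2*δ) / (1 - 2*δ)) := by
  have hα : 0 < 1 - 2*δ := by linarith
  set f : ℝ → ℝ := fun t => |t| ^ δ * D t with hfdef
  set g : ℝ → ℝ := fun t => |t| ^ (-δ) with hgdef
  have hw : Continuous fun t : ℝ => |t| ^ (2*δ) :=
    continuous_abs.rpow_const fun t => Or.inr (by linarith)
  have hwD : Continuous fun t : ℝ => |t| ^ (2*δ) * D t ^ 2 := hw.mul (hD.pow 2)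
  have hint : ∀ a b : ℝ, IntervalIntegrable (fun t => |t| ^ (2*δ) * D t ^ 2) volume a b :=
    fun a b => hwD.intervalIntegrable a b
  have hfsq : (fun t => f t ^ 2) = fun t => |t| ^ (2*δ) * D t ^ 2 := by
    funext t
    rw [hfdef, mul_pow, ← Real.rpow_natCast (|t| ^ δ) 2, ← Real.rpow_mul (abs_nonneg t)]
    norm_num [mul_comm]
  have hgsq : (fun t => g t ^ 2) = fun t => |t| ^ (-(2*δ)) := by
    funext t
    rw [hgdef, ← Real.rpow_natCast (|t| ^ (-δ)) 2, ← Real.rpow_mul (abs_nonneg t)]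
    norm_num [mul_comm]
  have hf2 : IntervalIntegrable (fun t => f t ^ 2) volume 0 x := by
    rw [hfsq]; exact hint 0 x
  have hg2 : IntervalIntegrable (fun t => g t ^ 2) volume 0 x := by
    rw [hgsq]; exact abs_rpow_intInt (by linarith) 0 x
  have hfg : IntervalIntegrable (fun t => f t * g t) volume 0 x := by
    refine (hD.intervalIntegrable 0 x).congr_ae ?_
    rw [Filter.EventuallyEq, ae_restrict_iff' measurableSet_uIoc]
    filter_upwards with t ht
    rw [uIoc_of_le hx0] at ht
    have htp : (0:ℝ) < |t| := abs_pos.mpr (ne_of_gt ht.1)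
    show D t = f t * g t
    rw [hfdef, hgdef]
    simp only [Real.rpow_neg (abs_nonneg t)]
    field_simp
  have hfgval : ∫ t in (0:ℝ)..x, f t * g t = ∫ t in (0:ℝ)..x, D t := by
    apply intervalIntegral.integral_congr_ae
    filter_upwards with t ht
    rw [uIoc_of_le hx0] at ht
    have htp : (0:ℝ) < |t| := abs_pos.mpr (ne_of_gt ht.1)
    rw [hfdef, hgdef]
    simp only [Real.rpow_neg (abs_nonneg t)]
    field_simp
  have hcs := cs_int hx0 hf2 hg2 hfg
  rw [hfgval, hfsq, hgsq] at hcs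
  have hgval : ∫ t in (0:ℝ)..x, |t| ^ (-(2*δ)) = x ^ (1 - 2*δ) / (1 - 2*δ) := by
    rw [int_abs_rpow (by linarith) hx0]
    have he : -(2*δ) + 1 = 1 - 2*δ := by ring
    rw [he]
  rw [hgval] at hcs
  refine hcs.trans ?_
  have hmono : (∫ t in (0:ℝ)..x, |t| ^ (2*δ) * D t ^ 2)
      ≤ ∫ t in (-1:ℝ)..1, |t| ^ (2*δ) * D t ^ 2 :=
    int_sub_le (fun t => mul_nonneg (Real.rpow_nonneg (abs_nonneg t) _) (sq_nonneg _))
      hint (by norm_num) hx0 hx1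
  have hnn : 0 ≤ x ^ (1 - 2*δ) / (1 - 2*δ) :=
    div_nonneg (Real.rpow_nonneg hx0 _) (le_of_lt hα)
  exact mul_le_mul_of_nonneg_right hmono hnn

theorem stmt6 (δ : ℝ) (hδ0 : 0 ≤ δ) (hδ : δ < 1/2) (ψ : ℝ → ℝ) (hψ : ContDiff ℝ 1 ψ) :
    ∫ x in (-1 : ℝ)..1, |x| ^ (2 * δ) * (deriv ψ x) ^ 2 ≥
      ((1 - 2 * δ) / 2) *
        ∫ x in (-1 : ℝ)..1, (ψ x - (1/2) * ∫ y in (-1 : ℝ)..1, ψ y) ^ 2 := by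
  have hα : 0 < 1 - 2*δ := by linarith
  set D := deriv ψ with hDdef
  have hD : Continuous D := hψ.continuous_deriv le_rfl
  have hψc : Continuous ψ := hψ.continuous
  set A : ℝ := ∫ x in (-1:ℝ)..1, |x| ^ (2 * δ) * D x ^ 2 with hAdef
  have hA0 : 0 ≤ A := integral_nonneg (by norm_num)
    fun u _ => mul_nonneg (Real.rpow_nonneg (abs_nonneg u) _) (sq_nonneg _)
  have hFTC : ∀ a b : ℝ, ∫ t in a..b, D t = ψ b - ψ a := by
    intro a b
    apply integral_deriv_eq_sub (f := ψ)
    · intro t _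
      exact hψ.differentiable one_ne_zero t
    · exact hD.intervalIntegrable a b
  have K : ∀ x ∈ Icc (-1:ℝ) 1, (ψ x - ψ 0)^2 ≤ A / (1 - 2*δ) := by
    intro x hx
    rcases le_total 0 x with h | h
    · have h1 := key_half δ hδ0 hδ D hD h hx.2
      rw [hFTC 0 x] at h1
      have h2 : x ^ (1 - 2*δ) ≤ 1 := Real.rpow_le_one h hx.2 (le_of_lt hα)
      calc (ψ x - ψ 0)^2 ≤ A * (x ^ (1 - 2*δ) / (1 - 2*δ)) := h1
        _ ≤ A * (1 / (1 - 2*δ)) := by gcongr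
        _ = A / (1 - 2*δ) := by ring
    · have hA' : (∫ t in (-1:ℝ)..1, |t| ^ (2 * δ) * (D (-t)) ^ 2) = A := by
        have e1 : (fun t : ℝ => |t| ^ (2 * δ) * (D (-t)) ^ 2)
            = fun t => |(-t)| ^ (2 * δ) * (D (-t)) ^ 2 := by
          funext t; rw [abs_neg]
        rw [e1, hAdef]
        have := intervalIntegral.integral_comp_neg (a := (-1:ℝ)) (b := 1)
          (fun t => |t| ^ (2 * δ) * D t ^ 2)
        simpa using this
      have h1 := key_half δ hδ0 hδ (fun s => D (-s)) (hD.comp continuous_neg)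
        (x := -x) (by linarith) (by linarith [hx.1])
      rw [hA'] at h1
      have hint' : ∫ t in (0:ℝ)..(-x), D (-t) = ψ 0 - ψ x := by
        rw [intervalIntegral.integral_comp_neg (fun t => D t)]
        simp only [neg_neg, neg_zero]
        rw [hFTC x 0]
      rw [hint'] at h1
      have h2 : (-x) ^ (1 - 2*δ) ≤ 1 :=
        Real.rpow_le_one (by linarith) (by linarith [hx.1]) (le_of_lt hα)
      calc (ψ x - ψ 0)^2 = (ψ 0 - ψ x)^2 := by ring
        _ ≤ A * ((-x) ^ (1 - 2*δ) / (1 - 2*δ)) := h1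
        _ ≤ A * (1 / (1 - 2*δ)) := by gcongr
        _ = A / (1 - 2*δ) := by ring
  set m : ℝ := (1/2) * ∫ y in (-1:ℝ)..1, ψ y with hm
  set c : ℝ := ψ 0 with hc
  have hintψ : ∫ y in (-1:ℝ)..1, ψ y = 2*m := by rw [hm]; ring
  have i1 : IntervalIntegrable (fun x => (ψ x - m)^2) volume (-1) 1 :=
    ((hψc.sub continuous_const).pow 2).intervalIntegrable _ _
  have i2 : IntervalIntegrable (fun x => (2*(m - c)) * ψ x) volume (-1) 1 :=
    (continuous_const.mul hψc).intervalIntegrable _ _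
  have i3 : IntervalIntegrable (fun _ : ℝ => c^2 - m^2) volume (-1) 1 :=
    intervalIntegrable_const
  have hexp : ∫ x in (-1:ℝ)..1, (ψ x - c)^2
      = (∫ x in (-1:ℝ)..1, (ψ x - m)^2) + (2*(m - c))*(2*m) + 2*(c^2 - m^2) := by
    have he : ∀ x : ℝ, (ψ x - c)^2
        = (ψ x - m)^2 + (2*(m - c)) * ψ x + (c^2 - m^2) := fun x => by ring
    simp only [he]
    rw [integral_add (i1.add i2) i3, integral_add i1 i2, intervalIntegral.integral_const_mul, hintψ,
      intervalIntegral.integral_const]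
    norm_num
  have h1 : ∫ x in (-1:ℝ)..1, (ψ x - m)^2 ≤ ∫ x in (-1:ℝ)..1, (ψ x - c)^2 := by
    rw [hexp]; nlinarith [sq_nonneg (m - c)]
  have h2 : ∫ x in (-1:ℝ)..1, (ψ x - c)^2 ≤ ∫ _x in (-1:ℝ)..1, A / (1 - 2*δ) :=
    integral_mono_on (by norm_num)
      (((hψc.sub continuous_const).pow 2).intervalIntegrable _ _)
      intervalIntegrable_const K
  have h3 : ∫ _x in (-1:ℝ)..1, A / (1 - 2*δ) = 2 * (A / (1 - 2*δ)) := by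
    rw [intervalIntegral.integral_const]
    norm_num
  rw [ge_iff_le]
  have h4 : ∫ x in (-1:ℝ)..1, (ψ x - m)^2 ≤ 2 * (A / (1 - 2*δ)) :=
    h1.trans (h2.trans_eq h3)
  have h5 : (1 - 2*δ) * (∫ x in (-1:ℝ)..1, (ψ x - m)^2)
      ≤ (1 - 2*δ) * (2 * (A / (1 - 2*δ))) := by gcongr
  have h6 : (1 - 2*δ) * (2 * (A / (1 - 2*δ))) = 2 * A := by
    field_simp
  linarith
end

section
/- Let δ₁ ∈ [1/2, 1) and χₙ be as defined (χₙ(x) = 0 for |x| ≤ 1/n, χₙ = 1 − η/ηₙ on [1/n,1], χₙ = −1 + σ/σₙ on [−1,−1/n]). Then χₙ is odd, so ∫_{−1}^{1} χₙ = 0, and lim_{n→∞} ∫_{−1}^{1} χₙ(x)² dx = 2. Consequently the weighted Poincaré inequality ∫_{−1}^1 |x|^{2δ₁}(ψ')² ≥ λ ∫_{−1}^1 (ψ − ⟨ψ⟩)² fails for every λ > 0 on [−1,1] when δ₁ ∈ [1/2,1). -/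
open MeasureTheory intervalIntegral Real Set Filter

/-- `η(x) = ∫_x^1 |s|^{-2δ} ds`. -/
noncomputable def eta (δ x : ℝ) : ℝ := ∫ s in x..1, |s| ^ (-(2 * δ))

/-- `σ(x) = ∫_{-1}^x |s|^{-2δ} ds`. -/
noncomputable def sigm (δ x : ℝ) : ℝ := ∫ s in (-1 : ℝ)..x, |s| ^ (-(2 * δ))

lemma rint {δ a b : ℝ} (ha : 0 < a) (hb : 0 < b) :
    IntervalIntegrable (fun s : ℝ => |s| ^ (-(2*δ))) volume a b := by
  apply ContinuousOn.intervalIntegrable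
  intro s hs
  have hs0 : 0 < s := lt_of_lt_of_le (lt_min ha hb) hs.1
  exact ((continuous_abs.continuousAt.rpow_const
    (Or.inl (abs_ne_zero.2 hs0.ne')))).continuousWithinAt

lemma eta_split {δ x y : ℝ} (hx : 0 < x) (hy : 0 < y) :
    eta δ x = (∫ s in x..y, |s| ^ (-(2*δ))) + eta δ y := by
  rw [eta, eta, integral_add_adjacent_intervals (rint hx hy) (rint hy one_pos)]

lemma eta_anti {δ x y : ℝ} (hx : 0 < x) (hxy : x ≤ y) : eta δ y ≤ eta δ x := by
  have hy : 0 < y := lt_of_lt_of_le hx hxy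
  rw [eta_split (δ := δ) hx hy]
  have : 0 ≤ ∫ s in x..y, |s| ^ (-(2*δ)) :=
    intervalIntegral.integral_nonneg hxy (fun u _ => Real.rpow_nonneg (abs_nonneg u) _)
  linarith

lemma eta_nonneg {δ x : ℝ} (hx1 : x ≤ 1) : 0 ≤ eta δ x :=
  intervalIntegral.integral_nonneg hx1 (fun u _ => Real.rpow_nonneg (abs_nonneg u) _)

lemma eta_ge_log {δ x : ℝ} (h1 : 1/2 ≤ δ) (hx : 0 < x) (hx1 : x ≤ 1) :
    Real.log x⁻¹ ≤ eta δ x := by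
  have hinv : IntervalIntegrable (fun s : ℝ => s⁻¹) volume x 1 := by
    apply ContinuousOn.intervalIntegrable
    intro s hs
    have hs0 : 0 < s := lt_of_lt_of_le (lt_min hx one_pos) hs.1
    exact (continuousAt_inv₀ hs0.ne').continuousWithinAt
  have key : (∫ s in x..1, s⁻¹) ≤ eta δ x := by
    apply intervalIntegral.integral_mono_on hx1 hinv (rint hx one_pos)
    intro s hs
    have hs0 : 0 < s := lt_of_lt_of_le hx hs.1
    have : s ^ (-1 : ℝ) ≤ s ^ (-(2*δ)) :=
      Real.rpow_le_rpow_of_exponent_ge hs0 hs.2 (by linarith)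
    rw [abs_of_pos hs0]
    rwa [Real.rpow_neg_one] at this
  rwa [integral_inv_of_pos hx one_pos, one_div] at key


lemma etaN_tendsto {δ : ℝ} (h1 : 1/2 ≤ δ) :
    Tendsto (fun n : ℕ => eta δ ((n : ℝ))⁻¹) atTop atTop := by
  apply tendsto_atTop_mono' _ _
    (Real.tendsto_log_atTop.comp (tendsto_natCast_atTop_atTop (R := ℝ)))
  · filter_upwards [eventually_ge_atTop 1] with n hn
    have hn0 : (0:ℝ) < (n:ℝ) := by exact_mod_cast hn
    have := eta_ge_log (δ := δ) h1 (x := (n:ℝ)⁻¹) (by positivity)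
      (by rw [inv_le_one_iff₀]; right; exact_mod_cast hn)
    rwa [inv_inv] at this

lemma etaN_pos {δ : ℝ} (h1 : 1/2 ≤ δ) {n : ℕ} (hn : 2 ≤ n) : 0 < eta δ ((n:ℝ))⁻¹ := by
  have hn2 : (2:ℝ) ≤ (n:ℝ) := by exact_mod_cast hn
  have h := eta_ge_log (δ := δ) h1 (x := (n:ℝ)⁻¹) (by positivity)
    (by rw [inv_le_one_iff₀]; right; linarith)
  rw [inv_inv] at h
  have : (0:ℝ) < Real.log n := Real.log_pos (by linarith)
  linarith

lemma sigm_eq (δ x : ℝ) : sigm δ x = eta δ (-x) := by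
  rw [eta, sigm]
  have := intervalIntegral.integral_comp_neg (a := -x) (b := 1)
    (fun s : ℝ => |s| ^ (-(2*δ)))
  simp only [abs_neg, neg_neg] at this ⊢
  rw [← this]

/-- The cut-off functions `χₙ`. -/
noncomputable def chiN (δ : ℝ) (n : ℕ) (x : ℝ) : ℝ :=
  if (n : ℝ)⁻¹ ≤ x then 1 - eta δ x / eta δ (n : ℝ)⁻¹
  else if x ≤ -(n : ℝ)⁻¹ then -1 + sigm δ x / sigm δ (-(n : ℝ)⁻¹)
  else 0

lemma chiN_neg {δ : ℝ} {n : ℕ} (hn : 0 < ((n:ℝ))⁻¹) (x : ℝ) :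
    chiN δ n (-x) = -chiN δ n x := by
  have hs : ∀ y : ℝ, sigm δ y = eta δ (-y) := sigm_eq δ
  simp only [chiN, hs, neg_neg]
  rcases le_or_gt ((n:ℝ))⁻¹ x with h | h
  · rw [if_neg (show ¬((n:ℝ)⁻¹ ≤ -x) by push_neg; linarith),
      if_pos (show -x ≤ -((n:ℝ))⁻¹ by linarith), if_pos h]
    ring
  · rcases le_or_gt x (-((n:ℝ))⁻¹) with h' | h'
    · rw [if_pos (show (n:ℝ)⁻¹ ≤ -x by linarith),
        if_neg (show ¬((n:ℝ)⁻¹ ≤ x) by push_neg; linarith), if_pos h']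
      ring
    · rw [if_neg (show ¬((n:ℝ)⁻¹ ≤ -x) by push_neg; linarith),
        if_neg (show ¬(-x ≤ -((n:ℝ))⁻¹) by push_neg; linarith),
        if_neg (show ¬((n:ℝ)⁻¹ ≤ x) by push_neg; linarith),
        if_neg (show ¬(x ≤ -((n:ℝ))⁻¹) by push_neg; linarith)]
      ring

lemma int_chi_zero {δ : ℝ} {n : ℕ} (hn : 0 < ((n:ℝ))⁻¹) :
    ∫ x in (-1:ℝ)..1, chiN δ n x = 0 := by
  have h1 : (∫ x in (-1:ℝ)..1, chiN δ n (-x)) = ∫ x in (-1:ℝ)..1, chiN δ n x := by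
    rw [intervalIntegral.integral_comp_neg (fun x => chiN δ n x)]
    norm_num
  have h2 : (∫ x in (-1:ℝ)..1, chiN δ n (-x)) = - ∫ x in (-1:ℝ)..1, chiN δ n x := by
    simp_rw [chiN_neg hn]
    exact intervalIntegral.integral_neg
  linarith

lemma chiN_right {δ : ℝ} {n : ℕ} {x : ℝ} (hx : (n:ℝ)⁻¹ ≤ x) :
    chiN δ n x = 1 - eta δ x / eta δ (n:ℝ)⁻¹ := if_pos hx

lemma chiN_mid {δ : ℝ} {n : ℕ} (he : eta δ ((n:ℝ))⁻¹ ≠ 0)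
    {x : ℝ} (hx : x ∈ Icc (-((n:ℝ))⁻¹) ((n:ℝ))⁻¹) : chiN δ n x = 0 := by
  have hs : sigm δ (-((n:ℝ))⁻¹) ≠ 0 := by rw [sigm_eq, neg_neg]; exact he
  rw [chiN]
  by_cases hc : (n:ℝ)⁻¹ ≤ x
  · have hx2 : x = (n:ℝ)⁻¹ := le_antisymm hx.2 hc
    rw [if_pos hc, hx2, div_self he]; ring
  · rw [if_neg hc]
    by_cases hc' : x ≤ -(n:ℝ)⁻¹
    · have hx1 : x = -(n:ℝ)⁻¹ := le_antisymm hc' hx.1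
      rw [if_pos hc', hx1, div_self hs]; ring
    · rw [if_neg hc']

lemma mono_sq {δ : ℝ} {n : ℕ} (hc : 0 < ((n:ℝ))⁻¹) (he : 0 < eta δ ((n:ℝ))⁻¹) :
    MonotoneOn (fun x => (chiN δ n x)^2) (Icc ((n:ℝ))⁻¹ 1) := by
  intro x hx y hy hxy
  dsimp only
  rw [chiN_right hx.1, chiN_right hy.1]
  have h1 : eta δ y ≤ eta δ x := eta_anti (lt_of_lt_of_le hc hx.1) hxy
  have h2 : eta δ x ≤ eta δ ((n:ℝ))⁻¹ := eta_anti hc hx.1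
  have hxle : eta δ x / eta δ ((n:ℝ))⁻¹ ≤ 1 := (div_le_one he).2 h2
  have hyx : eta δ y / eta δ ((n:ℝ))⁻¹ ≤ eta δ x / eta δ ((n:ℝ))⁻¹ := by gcongr
  exact pow_le_pow_left₀ (by linarith) (by linarith) 2

lemma int_sq_eq {δ : ℝ} (h1 : 1/2 ≤ δ) {n : ℕ} (hn : 2 ≤ n) :
    ∫ x in (-1:ℝ)..1, (chiN δ n x)^2
      = 2 * ∫ x in ((n:ℝ))⁻¹..1, (chiN δ n x)^2 := by
  have hn0 : 0 < n := by omega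
  have hc : 0 < ((n:ℝ))⁻¹ := by positivity
  have hc1 : ((n:ℝ))⁻¹ ≤ 1 := by
    rw [inv_le_one_iff₀]; right; exact_mod_cast Nat.one_le_of_lt hn
  have he : 0 < eta δ ((n:ℝ))⁻¹ := etaN_pos h1 hn
  set g : ℝ → ℝ := fun x => (chiN δ n x)^2 with hg
  have hIright : IntervalIntegrable g volume ((n:ℝ))⁻¹ 1 := by
    apply MonotoneOn.intervalIntegrable
    rw [uIcc_of_le hc1]
    exact mono_sq hc he
  have hmid0 : EqOn g (fun _ => (0:ℝ)) (Icc (-((n:ℝ))⁻¹) ((n:ℝ))⁻¹) := by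
    intro x hx
    simp only [hg, chiN_mid he.ne' hx]
    norm_num
  have hImid : IntervalIntegrable g volume (-((n:ℝ))⁻¹) ((n:ℝ))⁻¹ := by
    apply MonotoneOn.intervalIntegrable
    rw [uIcc_of_le (by linarith)]
    intro x hx y hy _
    rw [hmid0 hx, hmid0 hy]
  have hsq : ∀ x, (chiN δ n (-x))^2 = (chiN δ n x)^2 := fun x => by
    rw [chiN_neg hc]; ring
  have hgneg : (fun x => g (-x)) = g := funext hsq
  have hIleft : IntervalIntegrable g volume (-1) (-((n:ℝ))⁻¹) := by
    have h := (IntervalIntegrable.iff_comp_neg).mp hIright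
    rw [hgneg] at h
    exact h.symm
  have hsplit1 := intervalIntegral.integral_add_adjacent_intervals
    (a := (-1:ℝ)) (b := -((n:ℝ))⁻¹) (c := 1) hIleft (hImid.trans hIright)
  have hsplit2 := intervalIntegral.integral_add_adjacent_intervals
    (a := -((n:ℝ))⁻¹) (b := ((n:ℝ))⁻¹) (c := 1) hImid hIright
  have hmid : (∫ x in (-((n:ℝ))⁻¹)..((n:ℝ))⁻¹, g x) = 0 := by
    rw [intervalIntegral.integral_congr (by rw [uIcc_of_le (by linarith)]; exact hmid0)]
    simp
  have hleft : (∫ x in (-1:ℝ)..(-((n:ℝ))⁻¹), g x) = ∫ x in ((n:ℝ))⁻¹..1, g x := by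
    have h := intervalIntegral.integral_comp_neg (a := ((n:ℝ))⁻¹) (b := 1) g
    rw [hgneg] at h
    exact h.symm
  rw [← hsplit1, ← hsplit2, hmid, hleft]
  ring

set_option maxHeartbeats 1000000 in
lemma part3 {δ : ℝ} (h1 : 1/2 ≤ δ) :
    Tendsto (fun n : ℕ => ∫ x in (-1:ℝ)..1, (chiN δ n x)^2) atTop (nhds 2) := by
  rw [Metric.tendsto_atTop]
  intro ε hε
  set a : ℝ := min (ε/8) 2⁻¹ with ha_def
  have ha : 0 < a := lt_min (by linarith) (by norm_num)
  have ha2 : a ≤ 2⁻¹ := min_le_right _ _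
  have ha8 : a ≤ ε/8 := min_le_left _ _
  have ha1 : a ≤ 1 := by linarith
  obtain ⟨N1, hN1⟩ := eventually_atTop.mp
    (tendsto_atTop.mp (etaN_tendsto h1) (max (16 * eta δ a / ε) 1))
  refine ⟨max N1 (max 2 ⌈a⁻¹⌉₊), fun n hn => ?_⟩
  have hn1 : N1 ≤ n := le_trans (le_max_left _ _) hn
  have hn2 : 2 ≤ n := le_trans (le_trans (le_max_left _ _) (le_max_right N1 _)) hn
  have hnceil : (⌈a⁻¹⌉₊ : ℝ) ≤ (n:ℝ) := by
    exact_mod_cast le_trans (le_trans (le_max_right 2 _) (le_max_right N1 _)) hn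
  have hn0 : (0:ℝ) < (n:ℝ) := by
    have : (2:ℝ) ≤ (n:ℝ) := by exact_mod_cast hn2
    linarith
  have hc : 0 < ((n:ℝ))⁻¹ := by positivity
  have hca : ((n:ℝ))⁻¹ ≤ a := by
    rw [inv_le_comm₀ hn0 ha]
    exact le_trans (Nat.le_ceil _) hnceil
  have hc1 : ((n:ℝ))⁻¹ ≤ 1 := by linarith
  have he : 0 < eta δ ((n:ℝ))⁻¹ := etaN_pos h1 hn2
  have hE := hN1 n hn1
  set t : ℝ := eta δ a / eta δ ((n:ℝ))⁻¹ with ht_def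
  have hea : 0 ≤ eta δ a := eta_nonneg ha1
  have ht0 : 0 ≤ t := div_nonneg hea he.le
  have ht1 : t ≤ 1 := (div_le_one he).2 (eta_anti hc hca)
  have ht16 : t ≤ ε/16 := by
    rw [ht_def, div_le_iff₀ he]
    have h16 : 16 * eta δ a / ε ≤ eta δ ((n:ℝ))⁻¹ := le_trans (le_max_left _ _) hE
    rw [div_le_iff₀ hε] at h16
    nlinarith
  have hIright : IntervalIntegrable (fun x => (chiN δ n x)^2) volume ((n:ℝ))⁻¹ 1 := by
    apply MonotoneOn.intervalIntegrable
    rw [uIcc_of_le hc1]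
    exact mono_sq hc he
  have hI1 : IntervalIntegrable (fun x => (chiN δ n x)^2) volume ((n:ℝ))⁻¹ a := by
    apply MonotoneOn.intervalIntegrable
    rw [uIcc_of_le hca]
    exact (mono_sq hc he).mono (Icc_subset_Icc le_rfl ha1)
  have hI2 : IntervalIntegrable (fun x => (chiN δ n x)^2) volume a 1 := by
    apply MonotoneOn.intervalIntegrable
    rw [uIcc_of_le ha1]
    exact (mono_sq hc he).mono (Icc_subset_Icc hca le_rfl)
  set J : ℝ := ∫ x in ((n:ℝ))⁻¹..1, (chiN δ n x)^2 with hJ_def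
  have hJle : J ≤ 1 := by
    have hb : J ≤ ∫ _x in ((n:ℝ))⁻¹..1, (1:ℝ) := by
      apply intervalIntegral.integral_mono_on hc1 hIright intervalIntegrable_const
      intro x hx
      rw [chiN_right hx.1]
      have h2 : eta δ x ≤ eta δ ((n:ℝ))⁻¹ := eta_anti hc hx.1
      have h3 : 0 ≤ eta δ x := eta_nonneg hx.2
      have h4 : eta δ x / eta δ ((n:ℝ))⁻¹ ≤ 1 := (div_le_one he).2 h2
      have h5 : 0 ≤ eta δ x / eta δ ((n:ℝ))⁻¹ := div_nonneg h3 he.le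
      nlinarith
    rw [intervalIntegral.integral_const, smul_eq_mul, mul_one] at hb
    linarith
  have hsplit : J = (∫ x in ((n:ℝ))⁻¹..a, (chiN δ n x)^2)
      + ∫ x in a..1, (chiN δ n x)^2 :=
    (intervalIntegral.integral_add_adjacent_intervals hI1 hI2).symm
  have hI1nn : 0 ≤ ∫ x in ((n:ℝ))⁻¹..a, (chiN δ n x)^2 :=
    intervalIntegral.integral_nonneg hca (fun u _ => sq_nonneg _)
  have hI2low : (1 - a) * (1 - t)^2 ≤ ∫ x in a..1, (chiN δ n x)^2 := by
    have hb : (∫ _x in a..1, (1 - t)^2) ≤ ∫ x in a..1, (chiN δ n x)^2 := by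
      apply intervalIntegral.integral_mono_on ha1 intervalIntegrable_const hI2
      intro x hx
      rw [chiN_right (le_trans hca hx.1)]
      have hxa : eta δ x ≤ eta δ a := eta_anti ha hx.1
      have hu : eta δ x / eta δ ((n:ℝ))⁻¹ ≤ t := by rw [ht_def]; gcongr
      exact pow_le_pow_left₀ (by linarith) (by linarith) 2
    rwa [intervalIntegral.integral_const, smul_eq_mul] at hb
  have hJlow : 1 - ε/4 ≤ J := by
    have key : 1 - a - 2*t ≤ (1 - a) * (1 - t)^2 := by
      nlinarith [mul_nonneg ht0 ha.le,
        mul_nonneg (mul_nonneg ht0 ht0) (by linarith : (0:ℝ) ≤ 1 - a)]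
    have : 1 - a - 2*t ≤ J := by
      rw [hsplit]; linarith
    linarith
  rw [int_sq_eq h1 hn2, ← hJ_def, Real.dist_eq, abs_lt]
  constructor <;> linarith

lemma odd_integral {f : ℝ → ℝ} (h : ∀ x, f (-x) = -f x) :
    ∫ x in (-1:ℝ)..1, f x = 0 := by
  have h1 : (∫ x in (-1:ℝ)..1, f (-x)) = ∫ x in (-1:ℝ)..1, f x := by
    rw [intervalIntegral.integral_comp_neg f]
    norm_num
  have h2 : (∫ x in (-1:ℝ)..1, f (-x)) = - ∫ x in (-1:ℝ)..1, f x := by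
    simp_rw [h]
    exact intervalIntegral.integral_neg
  linarith

lemma log_two_mul_le_arsinh {m : ℝ} (hm : 0 < m) : Real.log (2*m) ≤ Real.arsinh m := by
  rw [Real.arsinh]
  apply Real.log_le_log (by positivity)
  nlinarith [Real.sq_sqrt (show (0:ℝ) ≤ 1+m^2 by positivity),
    Real.sqrt_nonneg (1+m^2)]

lemma arsinh_le_two_log {m : ℝ} (hm : 3 ≤ m) : Real.arsinh m ≤ 2 * Real.log m := by
  have hm0 : (0:ℝ) < m := by linarith
  rw [Real.arsinh]
  have hs : Real.sqrt (1 + m^2) ≤ 1 + m := by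
    nlinarith [Real.sq_sqrt (show (0:ℝ) ≤ 1+m^2 by positivity),
      Real.sqrt_nonneg (1+m^2)]
  calc Real.log (m + Real.sqrt (1+m^2)) ≤ Real.log (m^2) := by
        apply Real.log_le_log (by positivity)
        nlinarith
    _ = 2 * Real.log m := by rw [Real.log_pow]; norm_num

set_option maxHeartbeats 1600000 in
lemma part4core {δ : ℝ} (h1 : 1/2 ≤ δ) {L : ℝ} (hL : 0 < L) :
    ∃ ψ : ℝ → ℝ, ContDiff ℝ 1 ψ ∧
      ∫ x in (-1:ℝ)..1, |x| ^ (2*δ) * (deriv ψ x)^2 <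
        L * ∫ x in (-1:ℝ)..1, (ψ x - (1/2) * ∫ y in (-1:ℝ)..1, ψ y)^2 := by
  set m : ℝ := ((⌈Real.exp (16/L)⌉₊ + 3 : ℕ) : ℝ) with hm_def
  have hm3 : (3:ℝ) ≤ m := by
    have h0 : (0:ℝ) ≤ (⌈Real.exp (16/L)⌉₊ : ℝ) := Nat.cast_nonneg _
    rw [hm_def]; push_cast; linarith
  have hm0 : (0:ℝ) < m := by linarith
  have hmexp : Real.exp (16/L) ≤ m := by
    rw [hm_def]; push_cast
    have := Nat.le_ceil (Real.exp (16/L))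
    linarith
  have hlog : 16/L < Real.log (2*m) := by
    have h := Real.log_lt_log (Real.exp_pos (16/L))
      (show Real.exp (16/L) < 2*m by nlinarith [Real.exp_pos (16/L)])
    rwa [Real.log_exp] at h
  have hlogpos : 0 < Real.log (2*m) := lt_trans (by positivity) hlog
  set A : ℝ := Real.arsinh m with hA_def
  have hAge : Real.log (2*m) ≤ A := log_two_mul_le_arsinh hm0
  have hA0 : 0 < A := lt_of_lt_of_le hlogpos hAge
  have hAle : A ≤ 2 * Real.log m := arsinh_le_two_log hm3
  have hlogm : 0 < Real.log m := by
    have := Real.log_lt_log one_pos (show (1:ℝ) < m by linarith)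
    simpa using this
  set ψ : ℝ → ℝ := fun x => Real.arsinh (m*x) / A with hψ_def
  have hC1 : ContDiff ℝ 1 ψ :=
    (Real.contDiff_arsinh.comp (contDiff_const.mul contDiff_id)).div_const A
  have hd : ∀ x : ℝ, HasDerivAt ψ ((Real.sqrt (1+(m*x)^2))⁻¹ * m / A) x := by
    intro x
    have hlin : HasDerivAt (fun x : ℝ => m*x) m x := by
      simpa using (hasDerivAt_id x).const_mul m
    exact ((Real.hasDerivAt_arsinh (m*x)).comp x hlin).div_const A
  have hderiv : deriv ψ = fun x => (Real.sqrt (1+(m*x)^2))⁻¹ * m / A :=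
    funext fun x => (hd x).deriv
  have sqpos : ∀ x : ℝ, 0 < Real.sqrt (1+(m*x)^2) :=
    fun x => Real.sqrt_pos.2 (by positivity)
  have hds : ∀ x : ℝ, (deriv ψ x)^2 = m^2 / (A^2 * (1+(m*x)^2)) := by
    intro x
    have hq : (0:ℝ) < 1+(m*x)^2 := by positivity
    rw [hderiv]
    rw [div_pow, mul_pow, inv_pow, Real.sq_sqrt hq.le]
    field_simp
  -- pointwise bound
  have hpt : ∀ x ∈ Icc (-1:ℝ) 1,
      |x| ^ (2*δ) * (deriv ψ x)^2 ≤ (m/A)^2 * (|x| / (1+(m*x)^2)) := by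
    intro x hx
    have hq : (0:ℝ) < 1+(m*x)^2 := by positivity
    have habs : |x| ^ (2*δ) ≤ |x| := by
      rcases eq_or_ne x 0 with rfl | hx0
      · rw [abs_zero, Real.zero_rpow (by linarith)]
      · have h01 : 0 < |x| := abs_pos.2 hx0
        have hle1 : |x| ≤ 1 := abs_le.2 ⟨hx.1, hx.2⟩
        calc |x| ^ (2*δ) ≤ |x| ^ (1:ℝ) :=
              Real.rpow_le_rpow_of_exponent_ge h01 hle1 (by linarith)
          _ = |x| := Real.rpow_one _
    rw [hds]
    calc |x| ^ (2*δ) * (m^2 / (A^2 * (1+(m*x)^2)))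
        ≤ |x| * (m^2 / (A^2 * (1+(m*x)^2))) :=
          mul_le_mul_of_nonneg_right habs (by positivity)
      _ = (m/A)^2 * (|x| / (1+(m*x)^2)) := by
          rw [div_pow]; field_simp
  -- integrals
  have hcont1 : Continuous fun x : ℝ => Real.sqrt (1+(m*x)^2) := by continuity
  have hcontD : Continuous (deriv ψ) := by
    rw [hderiv]
    exact ((hcont1.inv₀ (fun x => (sqpos x).ne')).mul continuous_const).div_const A
  have hcontw : Continuous fun x : ℝ => |x| ^ (2*δ) :=
    continuous_abs.rpow_const (fun x => Or.inr (by linarith))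
  have hIlhs : IntervalIntegrable (fun x => |x| ^ (2*δ) * (deriv ψ x)^2)
      volume (-1) 1 := (hcontw.mul (hcontD.pow 2)).intervalIntegrable _ _
  have hcontq : Continuous fun x : ℝ => 1+(m*x)^2 := by continuity
  have hqne : ∀ x : ℝ, (1+(m*x)^2) ≠ 0 := fun x => by positivity
  have habsf : Continuous fun x : ℝ => |x|/(1+(m*x)^2) :=
    continuous_abs.div hcontq hqne
  have hIB : IntervalIntegrable (fun x => (m/A)^2 * (|x| / (1+(m*x)^2)))
      volume (-1) 1 := (continuous_const.mul habsf).intervalIntegrable _ _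
  -- value of the comparison integral
  have hf : Continuous fun x : ℝ => x/(1+(m*x)^2) := continuous_id.div hcontq hqne
  have hF : ∀ x : ℝ, HasDerivAt (fun x => Real.log (1+(m*x)^2) / (2*m^2))
      (x/(1+(m*x)^2)) x := by
    intro x
    have hpos : (0:ℝ) < 1+(m*x)^2 := by positivity
    have hlin : HasDerivAt (fun x : ℝ => m*x) m x := by
      simpa using (hasDerivAt_id x).const_mul m
    have hin : HasDerivAt (fun x : ℝ => 1+(m*x)^2) (2*(m*x)*m) x := by
      simpa using (hlin.pow 2).const_add 1
    have hlog2 := (Real.hasDerivAt_log hpos.ne').comp x hin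
    have h := hlog2.div_const (2*m^2)
    refine h.congr_deriv ?_
    field_simp
  have hplus : ∫ x in (0:ℝ)..1, |x|/(1+(m*x)^2) = Real.log (1+m^2)/(2*m^2) := by
    rw [intervalIntegral.integral_congr (g := fun x => x/(1+(m*x)^2))
      (fun x hx => by
        rw [uIcc_of_le (by norm_num : (0:ℝ) ≤ 1)] at hx
        simp only [abs_of_nonneg hx.1])]
    rw [intervalIntegral.integral_eq_sub_of_hasDerivAt (fun x _ => hF x)
      (hf.intervalIntegrable 0 1)]
    norm_num
  have hminus : ∫ x in (-1:ℝ)..0, |x|/(1+(m*x)^2) = Real.log (1+m^2)/(2*m^2) := by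
    have h := intervalIntegral.integral_comp_neg (a := (0:ℝ)) (b := 1)
      (fun x => |x|/(1+(m*x)^2))
    simp only [abs_neg, mul_neg, neg_sq, neg_zero] at h
    rw [← h, hplus]
  have hK : ∫ x in (-1:ℝ)..1, |x|/(1+(m*x)^2) = Real.log (1+m^2)/m^2 := by
    rw [← intervalIntegral.integral_add_adjacent_intervals
      (habsf.intervalIntegrable (-1) 0) (habsf.intervalIntegrable 0 1),
      hplus, hminus]
    ring
  have hLHS1 : ∫ x in (-1:ℝ)..1, |x| ^ (2*δ) * (deriv ψ x)^2
      ≤ (m/A)^2 * (Real.log (1+m^2)/m^2) := by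
    have h := intervalIntegral.integral_mono_on (by norm_num : (-1:ℝ) ≤ 1)
      hIlhs hIB hpt
    rwa [intervalIntegral.integral_const_mul, hK] at h
  have hsimp : (m/A)^2 * (Real.log (1+m^2)/m^2) = Real.log (1+m^2)/A^2 := by
    field_simp
  have hlog1 : Real.log (1+m^2) ≤ 2 * Real.log (2*m) := by
    calc Real.log (1+m^2) ≤ Real.log ((2*m)^2) := by
          apply Real.log_le_log (by positivity)
          nlinarith
      _ = 2 * Real.log (2*m) := by rw [Real.log_pow]; norm_num
  have hLHS2 : ∫ x in (-1:ℝ)..1, |x| ^ (2*δ) * (deriv ψ x)^2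
      ≤ 2 / Real.log (2*m) := by
    have hstep : Real.log (1+m^2)/A^2
        ≤ (2 * Real.log (2*m)) / (Real.log (2*m) * Real.log (2*m)) := by
      apply div_le_div₀ (by positivity) hlog1 (by positivity)
      nlinarith
    have heq : (2 * Real.log (2*m)) / (Real.log (2*m) * Real.log (2*m))
        = 2 / Real.log (2*m) := by
      field_simp
    rw [hsimp] at hLHS1
    linarith [hstep, heq ▸ hstep]
  have hsmall : 2 / Real.log (2*m) < L/8 := by
    have h := div_lt_div_of_pos_left (show (0:ℝ) < 2 by norm_num)
      (show (0:ℝ) < 16/L by positivity) hlog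
    have : (2:ℝ)/(16/L) = L/8 := by field_simp; ring
    linarith [this ▸ h]
  -- mean zero and lower bound on RHS
  have hodd : ∀ x, ψ (-x) = -ψ x := by
    intro x
    rw [hψ_def]
    simp only [mul_neg, Real.arsinh_neg, neg_div]
  have hmean : ∫ y in (-1:ℝ)..1, ψ y = 0 := odd_integral hodd
  have hψcont : Continuous ψ := hC1.continuous
  have hψsq : Continuous fun x => (ψ x)^2 := (hψcont.pow 2)
  have hRHSlow : (1/8 : ℝ) ≤ ∫ x in (-1:ℝ)..1, (ψ x)^2 := by
    have hs1 : (0:ℝ) ≤ ∫ x in (-1:ℝ)..(1/2), (ψ x)^2 :=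
      intervalIntegral.integral_nonneg (by norm_num) (fun u _ => sq_nonneg _)
    have hs2 : (1/8:ℝ) ≤ ∫ x in (1/2:ℝ)..1, (ψ x)^2 := by
      have hlow : ∀ x ∈ Icc (1/2:ℝ) 1, ((1:ℝ)/2)^2 ≤ (ψ x)^2 := by
        intro x hx
        have hmx : Real.log m ≤ Real.arsinh (m*x) := by
          have h2 : Real.log (2*(m/2)) ≤ Real.arsinh (m/2) :=
            log_two_mul_le_arsinh (by linarith)
          have h3 : Real.arsinh (m/2) ≤ Real.arsinh (m*x) :=
            Real.arsinh_le_arsinh.2 (by nlinarith [hx.1])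
          have h4 : 2*(m/2) = m := by ring
          rw [h4] at h2
          linarith
        have hhalf : (1:ℝ)/2 ≤ ψ x := by
          rw [hψ_def]
          have := div_le_div₀ (by linarith : (0:ℝ) ≤ Real.arsinh (m*x)) hmx hA0 hAle
          have heq : Real.log m / (2 * Real.log m) = 1/2 := by
            field_simp
          linarith [heq ▸ this]
        exact pow_le_pow_left₀ (by norm_num) hhalf 2
      have h := intervalIntegral.integral_mono_on (by norm_num : (1/2:ℝ) ≤ 1)
        (intervalIntegrable_const (μ := volume)) (hψsq.intervalIntegrable _ _) hlow
      rw [intervalIntegral.integral_const, smul_eq_mul] at h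
      norm_num at h
      linarith
    have hadd := intervalIntegral.integral_add_adjacent_intervals
      (μ := volume) (a := (-1:ℝ)) (b := 1/2) (c := 1)
      (hψsq.intervalIntegrable _ _) (hψsq.intervalIntegrable _ _)
    linarith [hadd]
  refine ⟨ψ, hC1, ?_⟩
  have hsimp2 : ∀ x : ℝ, (ψ x - (1/2) * ∫ y in (-1:ℝ)..1, ψ y)^2 = (ψ x)^2 := by
    intro x
    rw [hmean]
    ring
  simp_rw [hsimp2]
  have hmul : L * (1/8:ℝ) ≤ L * ∫ x in (-1:ℝ)..1, (ψ x)^2 :=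
    mul_le_mul_of_nonneg_left hRHSlow hL.le
  calc ∫ x in (-1:ℝ)..1, |x| ^ (2*δ) * (deriv ψ x)^2
      ≤ 2 / Real.log (2*m) := hLHS2
    _ < L/8 := hsmall
    _ ≤ L * ∫ x in (-1:ℝ)..1, (ψ x)^2 := by linarith

theorem stmt8 (δ : ℝ) (h1 : 1/2 ≤ δ) (h2 : δ < 1) :
    (∀ n : ℕ, 2 ≤ n → ∀ x ∈ Set.Icc (-1 : ℝ) 1, chiN δ n (-x) = -chiN δ n x) ∧
    (∀ n : ℕ, 2 ≤ n → ∫ x in (-1 : ℝ)..1, chiN δ n x = 0) ∧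
    Filter.Tendsto (fun n : ℕ => ∫ x in (-1 : ℝ)..1, (chiN δ n x) ^ 2)
      Filter.atTop (nhds 2) ∧
    ¬ ∃ L > (0 : ℝ), ∀ ψ : ℝ → ℝ, ContDiff ℝ 1 ψ →
        ∫ x in (-1 : ℝ)..1, |x| ^ (2 * δ) * (deriv ψ x) ^ 2 ≥
          L * ∫ x in (-1 : ℝ)..1, (ψ x - (1/2) * ∫ y in (-1 : ℝ)..1, ψ y) ^ 2 := by
  have hcpos : ∀ n : ℕ, 2 ≤ n → 0 < ((n:ℝ))⁻¹ := by
    intro n hn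
    have hn0 : (0:ℝ) < (n:ℝ) := by
      have : (2:ℝ) ≤ (n:ℝ) := by exact_mod_cast hn
      linarith
    positivity
  refine ⟨?_, ?_, ?_, ?_⟩
  · intro n hn x _
    exact chiN_neg (hcpos n hn) x
  · intro n hn
    exact int_chi_zero (hcpos n hn)
  · exact part3 h1
  · rintro ⟨L, hL, hall⟩
    obtain ⟨ψ, hψ, hlt⟩ := part4core h1 hL
    exact absurd (hall ψ hψ) (not_le.2 hlt)
end

section
/- Let δ₁ ∈ [0,1), δ₂, δ₂', γ, γ' ≥ 0 with γ, γ' < 1, and δ₁' ∈ [0,1). Define α = (1−δ₁)^{-1}, α' = (1−δ₁')^{-1}, β = (1+δ₂−δ₁)α, β' = (1+δ₂'−δ₁')α', γ = δ₂(1+δ₂−δ₁)^{-1}, γ' = δ₂'(1+δ₂'−δ₁')^{-1}. Then for x = (x₁,x₂) ∈ ℝ^n × ℝ^m: if |x₁|_∞^{(1−δ₁,1−δ₁')} < t and |x₂|_∞^{(1−γ,1−γ')} < t, then the 'distance to origin' D(x;0) := |x₁|^{(1−δ₁,1−δ₁')} + |x₂|(|x₁|^{(δ₂,δ₂')} + |x₂|^{(γ,γ')})^{-1}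 satisfies D(x;0) < 4(n+m)·t. (Embedding of the scaled cube C_t into the ball B_Δ(0; 4(n+m)t).) -/
/-- The Euclidean norm on `ℝ^n` (the default `‖·‖` on `Fin n → ℝ` is the sup norm). -/
noncomputable def enorm' {n : ℕ} (x : Fin n → ℝ) : ℝ := Real.sqrt (∑ i, (x i) ^ 2)

lemma ppow_nonneg {a : ℝ} (ha : 0 ≤ a) (μ μ' : ℝ) : 0 ≤ ppow a μ μ' := by
  unfold ppow; split <;> exact Real.rpow_nonneg ha _

lemma ppow_scale {a b c μ μ' : ℝ} (ha : 0 ≤ a) (hb : 0 ≤ b) (hc : 1 ≤ c)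
    (hab : a ≤ c * b) (hμ0 : 0 ≤ μ) (hμ1 : μ ≤ 1) (hμ'0 : 0 ≤ μ') (hμ'1 : μ' ≤ 1) :
    ppow a μ μ' ≤ c * ppow b μ μ' := by
  have hc0 : 0 < c := lt_of_lt_of_le one_pos hc
  unfold ppow
  by_cases hA : a ≤ 1 <;> by_cases hB : b ≤ 1 <;> simp only [hA, hB, if_true, if_false]
  · -- a ≤ 1, b ≤ 1
    calc a ^ μ ≤ (c * b) ^ μ := Real.rpow_le_rpow ha hab hμ0
    _ = c ^ μ * b ^ μ := Real.mul_rpow hc0.le hb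
    _ ≤ c * b ^ μ := by
        have : c ^ μ ≤ c ^ (1:ℝ) := Real.rpow_le_rpow_of_exponent_le hc hμ1
        rw [Real.rpow_one] at this
        exact mul_le_mul_of_nonneg_right this (Real.rpow_nonneg hb _)
  · -- a ≤ 1 < b
    have h1 : a ^ μ ≤ 1 := Real.rpow_le_one ha hA hμ0
    have h2 : (1:ℝ) ≤ b ^ μ' := Real.one_le_rpow (le_of_not_ge hB) hμ'0
    calc a ^ μ ≤ 1 := h1
    _ ≤ c * 1 := by linarith
    _ ≤ c * b ^ μ' := by nlinarith
  · -- a > 1, b ≤ 1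
    push_neg at hA
    have hbpos : 0 < b := by nlinarith
    have h1 : a ^ μ' ≤ a ^ (1:ℝ) := Real.rpow_le_rpow_of_exponent_le hA.le hμ'1
    rw [Real.rpow_one] at h1
    have h2 : b ≤ b ^ μ := by
      have := Real.rpow_le_rpow_of_exponent_ge hbpos hB hμ1
      rwa [Real.rpow_one] at this
    calc a ^ μ' ≤ a := h1
    _ ≤ c * b := hab
    _ ≤ c * b ^ μ := by nlinarith
  · -- a > 1, b > 1
    push_neg at hA hB
    calc a ^ μ' ≤ (c * b) ^ μ' := Real.rpow_le_rpow ha hab hμ'0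
    _ = c ^ μ' * b ^ μ' := Real.mul_rpow hc0.le (by linarith)
    _ ≤ c * b ^ μ' := by
        have : c ^ μ' ≤ c ^ (1:ℝ) := Real.rpow_le_rpow_of_exponent_le hc hμ'1
        rw [Real.rpow_one] at this
        exact mul_le_mul_of_nonneg_right this (Real.rpow_nonneg (by positivity) _)

lemma ppow_pos {a : ℝ} (ha : 0 < a) (μ μ' : ℝ) : 0 < ppow a μ μ' := by
  unfold ppow; split <;> exact Real.rpow_pos_of_pos ha _

lemma second_term_le {e P γ γ' : ℝ} (he : 0 ≤ e) (hP : 0 ≤ P) :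
    e * (P + ppow e γ γ')⁻¹ ≤ ppow e (1 - γ) (1 - γ') := by
  rcases eq_or_lt_of_le he with h0 | hpos
  · rw [← h0]; simpa using ppow_nonneg le_rfl (1-γ) (1-γ')
  · have hd : 0 < ppow e γ γ' := ppow_pos hpos γ γ'
    have hD : 0 < P + ppow e γ γ' := by linarith
    have step : e * (P + ppow e γ γ')⁻¹ ≤ e * (ppow e γ γ')⁻¹ := by
      apply mul_le_mul_of_nonneg_left _ hpos.le
      exact inv_anti₀ hd (by linarith)
    refine step.trans (le_of_eq ?_)
    unfold ppow
    split
    · rw [Real.rpow_sub hpos, Real.rpow_one, div_eq_mul_inv]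
    · rw [Real.rpow_sub hpos, Real.rpow_one, div_eq_mul_inv]



lemma enorm'_nonneg {k : ℕ} (x : Fin k → ℝ) : 0 ≤ enorm' x := Real.sqrt_nonneg _

lemma enorm'_le {k : ℕ} (x : Fin k → ℝ) : enorm' x ≤ (k : ℝ) * ‖x‖ := by
  have hsum : ∑ i, (x i) ^ 2 ≤ ((k : ℝ) * ‖x‖) ^ 2 := by
    have h1 : ∑ i, (x i) ^ 2 ≤ ∑ _i : Fin k, ‖x‖ ^ 2 := by
      apply Finset.sum_le_sum
      intro i _
      have := norm_le_pi_norm x i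
      have h0 : |x i| ≤ ‖x‖ := by simpa using this
      nlinarith [abs_nonneg (x i), sq_abs (x i)]
    have h2 : ∑ _i : Fin k, ‖x‖ ^ 2 = (k : ℝ) * ‖x‖ ^ 2 := by simp [mul_comm]
    have hk : (1 : ℝ) ≤ (k:ℝ) ∨ (k:ℝ) = 0 := by
      rcases Nat.eq_zero_or_pos k with h | h
      · right; simp [h]
      · left; exact_mod_cast h
    rcases hk with hk | hk
    · nlinarith [norm_nonneg x]
    · simp [hk] at h1 h2 ⊢
      exact h1
  calc enorm' x = Real.sqrt (∑ i, (x i) ^ 2) := rfl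
  _ ≤ Real.sqrt (((k:ℝ) * ‖x‖) ^ 2) := Real.sqrt_le_sqrt hsum
  _ = (k:ℝ) * ‖x‖ := Real.sqrt_sq (by positivity)

theorem stmt13 (n m : ℕ) (hn : 1 ≤ n) (hm : 1 ≤ m)
    (δ₁ δ₁' δ₂ δ₂' t : ℝ)
    (hδ₁ : 0 ≤ δ₁) (hδ₁1 : δ₁ < 1) (hδ₁' : 0 ≤ δ₁') (hδ₁'1 : δ₁' < 1)
    (hδ₂ : 0 ≤ δ₂) (hδ₂' : 0 ≤ δ₂') (ht : 0 < t)
    (x₁ : Fin n → ℝ) (x₂ : Fin m → ℝ)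
    (h1 : ppow ‖x₁‖ (1 - δ₁) (1 - δ₁') < t)
    (h2 : ppow ‖x₂‖ (1 - δ₂ * (1 + δ₂ - δ₁)⁻¹) (1 - δ₂' * (1 + δ₂' - δ₁')⁻¹) < t) :
    ppow (enorm' x₁) (1 - δ₁) (1 - δ₁') +
      enorm' x₂ *
        (ppow (enorm' x₁) δ₂ δ₂' +
          ppow (enorm' x₂) (δ₂ * (1 + δ₂ - δ₁)⁻¹) (δ₂' * (1 + δ₂' - δ₁')⁻¹))⁻¹ <
      4 * ((n : ℝ) + (m : ℝ)) * t := by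
  set γ := δ₂ * (1 + δ₂ - δ₁)⁻¹ with hγdef
  set γ' := δ₂' * (1 + δ₂' - δ₁')⁻¹ with hγ'def
  have hd : (0:ℝ) < 1 + δ₂ - δ₁ := by linarith
  have hd' : (0:ℝ) < 1 + δ₂' - δ₁' := by linarith
  have hγ0 : 0 ≤ γ := by positivity
  have hγ1 : γ ≤ 1 := by
    rw [hγdef, mul_inv_le_iff₀ hd]; linarith
  have hγ'0 : 0 ≤ γ' := by positivity
  have hγ'1 : γ' ≤ 1 := by
    rw [hγ'def, mul_inv_le_iff₀ hd']; linarith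
  have hnR : (1:ℝ) ≤ (n:ℝ) := by exact_mod_cast hn
  have hmR : (1:ℝ) ≤ (m:ℝ) := by exact_mod_cast hm
  have hx1 : enorm' x₁ ≤ (n:ℝ) * ‖x₁‖ := enorm'_le x₁
  have hx2 : enorm' x₂ ≤ (m:ℝ) * ‖x₂‖ := enorm'_le x₂
  have hT1 : ppow (enorm' x₁) (1 - δ₁) (1 - δ₁') ≤ (n:ℝ) * ppow ‖x₁‖ (1 - δ₁) (1 - δ₁') :=
    ppow_scale (enorm'_nonneg x₁) (norm_nonneg x₁) hnR hx1
      (by linarith) (by linarith) (by linarith) (by linarith)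
  have hT2a : enorm' x₂ *
      (ppow (enorm' x₁) δ₂ δ₂' + ppow (enorm' x₂) γ γ')⁻¹ ≤
      ppow (enorm' x₂) (1 - γ) (1 - γ') :=
    second_term_le (enorm'_nonneg x₂) (ppow_nonneg (enorm'_nonneg x₁) _ _)
  have hT2b : ppow (enorm' x₂) (1 - γ) (1 - γ') ≤ (m:ℝ) * ppow ‖x₂‖ (1 - γ) (1 - γ') :=
    ppow_scale (enorm'_nonneg x₂) (norm_nonneg x₂) hmR hx2
      (by linarith) (by linarith) (by linarith) (by linarith)
  have hP1 : (n:ℝ) * ppow ‖x₁‖ (1 - δ₁) (1 - δ₁') < (n:ℝ) * t :=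
    mul_lt_mul_of_pos_left h1 (by linarith)
  have hP2 : (m:ℝ) * ppow ‖x₂‖ (1 - γ) (1 - γ') < (m:ℝ) * t :=
    mul_lt_mul_of_pos_left h2 (by linarith)
  have : ppow (enorm' x₁) (1 - δ₁) (1 - δ₁') +
      enorm' x₂ * (ppow (enorm' x₁) δ₂ δ₂' + ppow (enorm' x₂) γ γ')⁻¹ <
      ((n:ℝ) + (m:ℝ)) * t := by nlinarith
  calc _ < ((n:ℝ) + (m:ℝ)) * t := this
  _ ≤ 4 * ((n:ℝ) + (m:ℝ)) * t := by nlinarith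
end

section
/- Let δ₁ ∈ [0,1). The Neumann realization of H = −d/dx (x^{2δ₁} d/dx) on L²(0,1), defined via the closure of the form ψ ↦ ∫_0^1 x^{2δ₁} (ψ'(x))² dx on C¹ functions, has zero as a simple eigenvalue: if ψ is in the form domain and ∫_0^1 x^{2δ₁}(ψ')² = 0 then ψ is constant on (0,1]. In particular there exists λ > 0 such that ∫_0^1 x^{2δ₁}(ψ'(x))² dx ≥ λ ∫_0^1 (ψ(x) − ⟨ψ⟩)² dx for all ψ ∈ C¹([0,1]), where ⟨ψ⟩ = ∫_0^1 ψ. -/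
open MeasureTheory Set intervalIntegral

/-- Cauchy–Schwarz for interval integrals of continuous functions. -/
lemma cs_interval {a b : ℝ} (hab : a ≤ b) {f g : ℝ → ℝ}
    (hf : ContinuousOn f (Set.Icc a b)) (hg : ContinuousOn g (Set.Icc a b)) :
    (∫ t in a..b, f t * g t) ^ 2 ≤ (∫ t in a..b, f t ^ 2) * (∫ t in a..b, g t ^ 2) := by
  have hu : Set.uIcc a b = Set.Icc a b := Set.uIcc_of_le hab
  have hf' : ContinuousOn f (Set.uIcc a b) := by rwa [hu]
  have hg' : ContinuousOn g (Set.uIcc a b) := by rwa [hu]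
  have hf2 : IntervalIntegrable (fun t => f t ^ 2) volume a b :=
    (hf'.pow 2).intervalIntegrable
  have hg2 : IntervalIntegrable (fun t => g t ^ 2) volume a b :=
    (hg'.pow 2).intervalIntegrable
  have hfg : IntervalIntegrable (fun t => f t * g t) volume a b :=
    (hf'.mul hg').intervalIntegrable
  set A := ∫ t in a..b, f t ^ 2 with hA
  set B := ∫ t in a..b, f t * g t with hB
  set C := ∫ t in a..b, g t ^ 2 with hC
  have key : ∀ r : ℝ, 0 ≤ A * (r * r) + (2 * B) * r + C := by
    intro r
    have e1 : ∫ t in a..b, (r * f t + g t) ^ 2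
        = ∫ t in a..b, (f t ^ 2 * (r * r) + ((f t * g t) * (2 * r) + g t ^ 2)) := by
      apply intervalIntegral.integral_congr
      intro t _; ring
    have e2 : ∫ t in a..b, (f t ^ 2 * (r * r) + ((f t * g t) * (2 * r) + g t ^ 2))
        = A * (r * r) + (B * (2 * r) + C) := by
      rw [intervalIntegral.integral_add (hf2.mul_const _) ((hfg.mul_const _).add hg2),
        intervalIntegral.integral_add (hfg.mul_const _) hg2,
        intervalIntegral.integral_mul_const, intervalIntegral.integral_mul_const]
    have e3 : (0:ℝ) ≤ ∫ t in a..b, (r * f t + g t) ^ 2 :=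
      intervalIntegral.integral_nonneg hab (fun t _ => sq_nonneg _)
    rw [e1, e2] at e3
    linarith
  have hd := discrim_le_zero key
  rw [discrim] at hd
  nlinarith [hd]

/-- Key pointwise estimate: for `x ∈ (0,1]`,
`(ψ x - ψ 1)² ≤ x^(-δ)/(1-δ) * ∫₀¹ t^(2δ) (ψ'(t))²`. -/
lemma key_estimate {δ : ℝ} (h0 : 0 ≤ δ) (h1 : δ < 1) {ψ : ℝ → ℝ} (hψ : ContDiff ℝ 1 ψ)
    {x : ℝ} (hx : x ∈ Set.Ioc (0:ℝ) 1) :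
    (ψ x - ψ 1) ^ 2 ≤ x ^ (-δ) / (1 - δ) * ∫ t in (0:ℝ)..1, t ^ (2 * δ) * (deriv ψ t) ^ 2 := by
  obtain ⟨hx0, hx1⟩ := hx
  have hd : Continuous (deriv ψ) := hψ.continuous_deriv le_rfl
  set f : ℝ → ℝ := fun t => t ^ (-δ) with hfdef
  set g : ℝ → ℝ := fun t => t ^ δ * deriv ψ t with hgdef
  have hpos : ∀ t ∈ Set.Icc x 1, (0:ℝ) < t := fun t ht => lt_of_lt_of_le hx0 ht.1
  have hfc : ContinuousOn f (Set.Icc x 1) := fun t ht =>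
    (Real.continuousAt_rpow_const t (-δ) (Or.inl (ne_of_gt (hpos t ht)))).continuousWithinAt
  have hgc : ContinuousOn g (Set.Icc x 1) := fun t ht =>
    (((Real.continuousAt_rpow_const t δ (Or.inl (ne_of_gt (hpos t ht)))).mul
      (hd.continuousAt)).continuousWithinAt)
  have hu : Set.uIcc x 1 = Set.Icc x 1 := Set.uIcc_of_le hx1
  -- Cauchy-Schwarz
  have hcs := cs_interval hx1 hfc hgc
  -- ∫ f g = ψ 1 - ψ x
  have hfgint : ∫ t in x..1, f t * g t = ψ 1 - ψ x := by
    have e1 : ∫ t in x..1, f t * g t = ∫ t in x..1, deriv ψ t := by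
      apply intervalIntegral.integral_congr
      intro t ht
      rw [hu] at ht
      have ht0 : (0:ℝ) < t := hpos t ht
      show t ^ (-δ) * (t ^ δ * deriv ψ t) = deriv ψ t
      rw [← mul_assoc, ← Real.rpow_add ht0]
      simp
    rw [e1]
    exact intervalIntegral.integral_deriv_eq_sub
      (fun t _ => (hψ.differentiable one_ne_zero).differentiableAt)
      (hd.intervalIntegrable _ _)
  -- bound on A = ∫ f²
  have hδ1pos : (0:ℝ) < 1 - δ := by linarith
  have hrpow_int : IntervalIntegrable (fun t : ℝ => t ^ (-δ)) volume x 1 :=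
    intervalIntegral.intervalIntegrable_rpow' (by linarith)
  have hAbound : (∫ t in x..1, f t ^ 2) ≤ x ^ (-δ) / (1 - δ) := by
    have step1 : (∫ t in x..1, f t ^ 2) ≤ ∫ t in x..1, x ^ (-δ) * t ^ (-δ) := by
      have hfc' : ContinuousOn f (Set.uIcc x 1) := by rwa [hu]
      apply intervalIntegral.integral_mono_on hx1
        (hfc'.pow 2).intervalIntegrable
        (continuousOn_const.mul hfc').intervalIntegrable
      intro t ht
      have ht0 : (0:ℝ) < t := hpos t ht
      have hle : t ^ (-δ) ≤ x ^ (-δ) :=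
        Real.rpow_le_rpow_of_nonpos hx0 ht.1 (neg_nonpos.2 h0)
      have hnn : (0:ℝ) ≤ t ^ (-δ) := Real.rpow_nonneg ht0.le _
      show f t ^ 2 ≤ x ^ (-δ) * t ^ (-δ)
      rw [sq]
      exact mul_le_mul_of_nonneg_right hle hnn
    have step2 : ∫ t in x..1, x ^ (-δ) * t ^ (-δ) = x ^ (-δ) * ∫ t in x..1, t ^ (-δ) :=
      intervalIntegral.integral_const_mul _ _
    have step3 : ∫ t in x..1, t ^ (-δ) = ((1:ℝ) ^ (-δ + 1) - x ^ (-δ + 1)) / (-δ + 1) :=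
      integral_rpow (Or.inl (by linarith))
    have hxnn : (0:ℝ) ≤ x ^ (-δ) := Real.rpow_nonneg hx0.le _
    have hx1δ : (0:ℝ) ≤ x ^ (-δ + 1) := Real.rpow_nonneg hx0.le _
    have step4 : x ^ (-δ) * ∫ t in x..1, t ^ (-δ) ≤ x ^ (-δ) / (1 - δ) := by
      rw [step3, Real.one_rpow]
      rw [div_eq_mul_inv (x ^ (-δ))]
      have h1 : (1 - x ^ (-δ + 1)) / (-δ + 1) ≤ (1 - δ)⁻¹ := by
        rw [div_le_iff₀ (by linarith)]
        have : (1-δ)⁻¹ * (-δ+1) = 1 := by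
          rw [show (-δ + 1) = 1 - δ by ring]
          exact inv_mul_cancel₀ (ne_of_gt hδ1pos)
        rw [this]
        linarith
      exact mul_le_mul_of_nonneg_left h1 hxnn
    calc (∫ t in x..1, f t ^ 2) ≤ x ^ (-δ) * ∫ t in x..1, t ^ (-δ) := by rw [← step2]; exact step1
      _ ≤ x ^ (-δ) / (1 - δ) := step4
  -- bound on C = ∫ g²
  have hWcont : Continuous (fun t : ℝ => t ^ (2 * δ)) :=
    Real.continuous_rpow_const (by linarith)
  have hEi : IntervalIntegrable (fun t : ℝ => t ^ (2 * δ) * (deriv ψ t) ^ 2) volume 0 1 :=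
    (hWcont.mul (hd.pow 2)).intervalIntegrable _ _
  have hCbound : (∫ t in x..1, g t ^ 2) ≤ ∫ t in (0:ℝ)..1, t ^ (2 * δ) * (deriv ψ t) ^ 2 := by
    have e1 : ∫ t in x..1, g t ^ 2 = ∫ t in x..1, t ^ (2 * δ) * (deriv ψ t) ^ 2 := by
      apply intervalIntegral.integral_congr
      intro t ht
      rw [hu] at ht
      have ht0 : (0:ℝ) < t := hpos t ht
      show (t ^ δ * deriv ψ t) ^ 2 = t ^ (2 * δ) * (deriv ψ t) ^ 2
      rw [mul_pow, sq (t ^ δ), ← Real.rpow_add ht0]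
      ring_nf
    rw [e1]
    apply intervalIntegral.integral_mono_interval hx0.le hx1 le_rfl
    · refine (MeasureTheory.ae_restrict_iff' measurableSet_Ioc).2 (Filter.Eventually.of_forall ?_)
      intro t ht
      exact mul_nonneg (Real.rpow_nonneg ht.1.le _) (sq_nonneg _)
    · exact hEi
  have hA0 : (0:ℝ) ≤ ∫ t in x..1, f t ^ 2 :=
    intervalIntegral.integral_nonneg hx1 (fun t _ => sq_nonneg _)
  have hC0 : (0:ℝ) ≤ ∫ t in x..1, g t ^ 2 :=
    intervalIntegral.integral_nonneg hx1 (fun t _ => sq_nonneg _)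
  have hbnd0 : (0:ℝ) ≤ x ^ (-δ) / (1 - δ) :=
    div_nonneg (Real.rpow_nonneg hx0.le _) (by linarith)
  have hfinal : (∫ t in x..1, f t ^ 2) * (∫ t in x..1, g t ^ 2)
      ≤ x ^ (-δ) / (1 - δ) * ∫ t in (0:ℝ)..1, t ^ (2 * δ) * (deriv ψ t) ^ 2 :=
    mul_le_mul hAbound hCbound hC0 hbnd0
  have heq : (ψ x - ψ 1) ^ 2 = (∫ t in x..1, f t * g t) ^ 2 := by
    rw [hfgint]; ring
  rw [heq]
  exact le_trans hcs hfinal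

theorem stmt16 (δ₁ : ℝ) (hδ₁0 : 0 ≤ δ₁) (hδ₁1 : δ₁ < 1) :
    (∀ ψ : ℝ → ℝ, ContDiff ℝ 1 ψ →
      (∫ x in (0 : ℝ)..1, x ^ (2 * δ₁) * (deriv ψ x) ^ 2) = 0 →
      ∀ x ∈ Set.Ioc (0 : ℝ) 1, ∀ y ∈ Set.Ioc (0 : ℝ) 1, ψ x = ψ y) ∧
    ∃ lam > (0 : ℝ), ∀ ψ : ℝ → ℝ, ContDiff ℝ 1 ψ →
      ∫ x in (0 : ℝ)..1, x ^ (2 * δ₁) * (deriv ψ x) ^ 2 ≥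
        lam * ∫ x in (0 : ℝ)..1, (ψ x - ∫ y in (0 : ℝ)..1, ψ y) ^ 2 := by
  have hδ1pos : (0:ℝ) < 1 - δ₁ := by linarith
  constructor
  · -- kernel is constants
    intro ψ hψ hE x hx y hy
    have hx' := key_estimate hδ₁0 hδ₁1 hψ hx
    have hy' := key_estimate hδ₁0 hδ₁1 hψ hy
    rw [hE, mul_zero] at hx' hy'
    have h1 : ψ x = ψ 1 := by nlinarith [sq_nonneg (ψ x - ψ 1)]
    have h2 : ψ y = ψ 1 := by nlinarith [sq_nonneg (ψ y - ψ 1)]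
    rw [h1, h2]
  · refine ⟨(1 - δ₁)^2, by positivity, ?_⟩
    intro ψ hψ
    set E := ∫ x in (0:ℝ)..1, x ^ (2 * δ₁) * (deriv ψ x) ^ 2 with hEdef
    set M := ∫ y in (0:ℝ)..1, ψ y with hMdef
    have hc : Continuous ψ := hψ.continuous
    have h01 : (0:ℝ) ≤ 1 := by norm_num
    -- Step A : ∫ (ψ - M)² ≤ ∫ (ψ - ψ 1)²
    have stepA : (∫ x in (0:ℝ)..1, (ψ x - M) ^ 2) ≤ ∫ x in (0:ℝ)..1, (ψ x - ψ 1) ^ 2 := by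
      have e1 : ∫ x in (0:ℝ)..1, (ψ x - ψ 1) ^ 2
          = ∫ x in (0:ℝ)..1, ((ψ x - M) ^ 2 + ((2 * (M - ψ 1)) * ψ x + (ψ 1 ^ 2 - M ^ 2))) := by
        apply intervalIntegral.integral_congr
        intro t _; ring
      have hi1 : IntervalIntegrable (fun x => (ψ x - M) ^ 2) volume 0 1 :=
        (((hc.sub continuous_const).pow 2)).intervalIntegrable _ _
      have hi2 : IntervalIntegrable (fun x => (2 * (M - ψ 1)) * ψ x) volume 0 1 :=
        ((continuous_const.mul hc)).intervalIntegrable _ _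
      have hi3 : IntervalIntegrable (fun _ : ℝ => ψ 1 ^ 2 - M ^ 2) volume 0 1 :=
        intervalIntegrable_const
      have e2 : ∫ x in (0:ℝ)..1, ((ψ x - M) ^ 2 + ((2 * (M - ψ 1)) * ψ x + (ψ 1 ^ 2 - M ^ 2)))
          = (∫ x in (0:ℝ)..1, (ψ x - M) ^ 2) + ((2 * (M - ψ 1)) * M + (ψ 1 ^ 2 - M ^ 2)) := by
        rw [intervalIntegral.integral_add hi1 (hi2.add hi3),
          intervalIntegral.integral_add hi2 hi3,
          intervalIntegral.integral_const_mul, intervalIntegral.integral_const]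
        simp [hMdef]
      have : (0:ℝ) ≤ (2 * (M - ψ 1)) * M + (ψ 1 ^ 2 - M ^ 2) := by nlinarith [sq_nonneg (M - ψ 1)]
      rw [e1, e2]
      linarith
    -- Step B : ∫ (ψ - ψ 1)² ≤ ∫ x^(-δ) * (E/(1-δ))
    have hE0 : (0:ℝ) ≤ E := by
      apply intervalIntegral.integral_nonneg h01
      intro t ht
      exact mul_nonneg (Real.rpow_nonneg ht.1 _) (sq_nonneg _)
    have hrpow_int : IntervalIntegrable (fun t : ℝ => t ^ (-δ₁)) volume 0 1 :=
      intervalIntegral.intervalIntegrable_rpow' (by linarith)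
    have stepB : (∫ x in (0:ℝ)..1, (ψ x - ψ 1) ^ 2)
        ≤ ∫ x in (0:ℝ)..1, x ^ (-δ₁) * (E / (1 - δ₁)) := by
      apply intervalIntegral.integral_mono_ae_restrict h01
        (((hc.sub continuous_const).pow 2).intervalIntegrable _ _)
        (hrpow_int.mul_const _)
      have h0ae : ∀ᵐ t : ℝ, t ≠ (0:ℝ) := by
        rw [MeasureTheory.ae_iff]
        have : {t : ℝ | ¬ t ≠ 0} = {0} := by ext t; simp
        rw [this]
        exact measure_singleton 0
      filter_upwards [MeasureTheory.ae_restrict_mem measurableSet_Icc,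
        MeasureTheory.ae_restrict_of_ae h0ae] with t ht ht0
      have htIoc : t ∈ Set.Ioc (0:ℝ) 1 := ⟨lt_of_le_of_ne ht.1 (Ne.symm ht0), ht.2⟩
      have := key_estimate hδ₁0 hδ₁1 hψ htIoc
      calc (ψ t - ψ 1) ^ 2 ≤ t ^ (-δ₁) / (1 - δ₁) * E := this
        _ = t ^ (-δ₁) * (E / (1 - δ₁)) := by ring
    -- Step C : compute the right-hand side
    have stepC : ∫ x in (0:ℝ)..1, x ^ (-δ₁) * (E / (1 - δ₁)) = E / (1 - δ₁) ^ 2 := by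
      rw [intervalIntegral.integral_mul_const]
      have : ∫ x in (0:ℝ)..1, x ^ (-δ₁) = ((1:ℝ) ^ (-δ₁ + 1) - (0:ℝ) ^ (-δ₁ + 1)) / (-δ₁ + 1) :=
        integral_rpow (Or.inl (by linarith))
      rw [this, Real.one_rpow, Real.zero_rpow (by linarith)]
      have hne : (1 - δ₁) ≠ 0 := ne_of_gt hδ1pos
      rw [show (-δ₁ + 1) = 1 - δ₁ by ring, sub_zero, div_mul_div_comm, one_mul, sq]
    have chain : (∫ x in (0:ℝ)..1, (ψ x - M) ^ 2) ≤ E / (1 - δ₁) ^ 2 := by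
      rw [← stepC]
      exact le_trans stepA stepB
    have hsq : (0:ℝ) < (1 - δ₁) ^ 2 := by positivity
    rw [ge_iff_le]
    calc (1 - δ₁) ^ 2 * ∫ x in (0:ℝ)..1, (ψ x - M) ^ 2
        ≤ (1 - δ₁) ^ 2 * (E / (1 - δ₁) ^ 2) := by
          exact mul_le_mul_of_nonneg_left chain hsq.le
      _ = E := by field_simp
end
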